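/- Let k be an algebraically closed field, let n > r ≥ 0 and s ≥ 1 be integers, and let L_1,…,L_s be pairwise disjoint r-dimensional linear subspaces of P^n over k. Let m_1,…,m_s ≥ 1 be integers, set m := max_i m_i, and let t ≥ m be an integer. If C(t+n, n) − Σ_{i=1}^s c_{n,r,m_i,t} > 0, then the ideal I := I(L_1)^{m_1} ∩ … ∩ I(L_s)^{m_s} contains a nonzero homogeneous polynomial of degree t; in particular α(I) ≤ t. -/

import Mathlib

/-- `c_{n,r,m,t} = Σ_{i=0}^{m−1} C(t−i+r, r)·C(i+n−r−1, n−r−1)`. -/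
def cConst (n r m t : ℕ) : ℕ :=
  ∑ i ∈ Finset.range m, Nat.choose (t - i + r) r * Nat.choose (i + n - r - 1) (n - r - 1)

/-- The homogeneous ideal of all polynomials in `k[x_0,…,x_n]` vanishing on a linear
subspace `W ⊆ k^{n+1}`. -/
def vanishingIdeal (k : Type*) [Field k] (n : ℕ) (W : Submodule k (Fin (n + 1) → k)) :
    Ideal (MvPolynomial (Fin (n + 1)) k) where
  carrier := {f | ∀ x ∈ W, MvPolynomial.eval x f = 0}
  add_mem' := by
    intro a b ha hb x hx
    simp [ha x hx, hb x hx]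
  zero_mem' := by
    intro x hx
    simp
  smul_mem' := by
    intro c f hf x hx
    simp [smul_eq_mul, hf x hx]

/-- `α(J)`: least degree of a nonzero homogeneous polynomial in `J`. -/
noncomputable def alphaDeg {k : Type*} [Field k] {n : ℕ}
    (J : Ideal (MvPolynomial (Fin (n + 1)) k)) : ℕ :=
  sInf {t | ∃ f ∈ J, f ≠ 0 ∧ MvPolynomial.IsHomogeneous f t}

open MvPolynomial

section Aux
variable {k : Type*} [Field k]

/-- Substitution by the linear forms of a linear map `u`. -/
noncomputable def lsub {N : ℕ} (u : (Fin N → k) →ₗ[k] (Fin N → k)) :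
    MvPolynomial (Fin N) k →ₐ[k] MvPolynomial (Fin N) k :=
  aeval (fun j => ∑ l, C (u (fun j' => if l = j' then 1 else 0) j) * X l)

lemma eval_lsub {N : ℕ} (u : (Fin N → k) →ₗ[k] (Fin N → k)) (f : MvPolynomial (Fin N) k)
    (x : Fin N → k) : eval x (lsub u f) = eval (u x) f := by
  have hx : ∀ j, u x j = ∑ l, x l * u (fun j' => if l = j' then 1 else 0) j := by
    intro j
    conv_lhs => rw [pi_eq_sum_univ x, map_sum]
    simp [Finset.sum_apply, smul_eq_mul]
  induction f using MvPolynomial.induction_on with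
  | C a => simp [lsub]
  | add p q hp hq => simp [map_add, hp, hq]
  | mul_X p j hp =>
      have hXj : (lsub u) (X j : MvPolynomial (Fin N) k)
          = ∑ l, C (u (fun j' => if l = j' then 1 else 0) j) * X l := aeval_X _ j
      rw [map_mul, hXj, eval_mul, hp, map_mul, eval_X, hx j]
      congr 1
      simp [mul_comm]

lemma lsub_isHomogeneous {N t : ℕ} (u : (Fin N → k) →ₗ[k] (Fin N → k))
    {f : MvPolynomial (Fin N) k} (hf : f.IsHomogeneous t) :
    (lsub u f).IsHomogeneous t := by
  have h := hf.aeval (fun j => ∑ l, C (u (fun j' => if l = j' then 1 else 0) j) * X l) (n := 1) ?_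
  · simpa [lsub] using h
  · intro j
    apply MvPolynomial.IsHomogeneous.sum
    intro l _
    simpa using MvPolynomial.isHomogeneous_C_mul_X_pow
      (u (fun j' => if l = j' then 1 else 0) j) l 1

end Aux
section Aux2
variable {k : Type*} [Field k]

lemma mem_vanishingIdeal {n : ℕ} {W : Submodule k (Fin (n + 1) → k)}
    {f : MvPolynomial (Fin (n + 1)) k} :
    f ∈ vanishingIdeal k n W ↔ ∀ x ∈ W, MvPolynomial.eval x f = 0 := Iff.rfl

/-- The coordinate subspace of vectors supported on the first `r+1` coordinates. -/
def Esub (k : Type*) [Field k] (n r : ℕ) : Submodule k (Fin (n + 1) → k) where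
  carrier := {x | ∀ j : Fin (n + 1), r < (j : ℕ) → x j = 0}
  add_mem' := by
    intro a b ha hb j hj
    simp [ha j hj, hb j hj]
  zero_mem' := by
    intro j hj
    simp
  smul_mem' := by
    intro c x hx j hj
    simp [hx j hj]

lemma mem_Esub {n r : ℕ} {x : Fin (n + 1) → k} :
    x ∈ Esub k n r ↔ ∀ j : Fin (n + 1), r < (j : ℕ) → x j = 0 := Iff.rfl

lemma X_mem_vanishingIdeal_Esub {n r : ℕ} {j : Fin (n + 1)} (hj : r < (j : ℕ)) :
    (X j : MvPolynomial (Fin (n + 1)) k) ∈ vanishingIdeal k n (Esub k n r) := by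
  intro x hx
  simpa using hx j hj

lemma mem_pow_vanishing {n : ℕ} (r m : ℕ) (f : MvPolynomial (Fin (n + 1)) k)
    (hf : ∀ d ∈ f.support, m ≤ ∑ j : Fin (n + 1), if r < (j : ℕ) then d j else 0) :
    f ∈ (vanishingIdeal k n (Esub k n r)) ^ m := by
  classical
  have key : ∀ (S : Finset (Fin (n + 1))) (d : Fin (n + 1) →₀ ℕ), (∀ j ∈ S, r < (j : ℕ)) →
      (∏ j ∈ S, (X j : MvPolynomial (Fin (n + 1)) k) ^ d j) ∈
        (vanishingIdeal k n (Esub k n r)) ^ (∑ j ∈ S, d j) := by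
    intro S d
    induction S using Finset.induction with
    | empty => simp
    | @insert a S ha ih =>
        intro hS
        rw [Finset.prod_insert ha, Finset.sum_insert ha, pow_add]
        exact Ideal.mul_mem_mul
          (Ideal.pow_mem_pow (X_mem_vanishingIdeal_Esub (hS a (Finset.mem_insert_self a S))) _)
          (ih fun j hj => hS j (Finset.mem_insert_of_mem hj))
  rw [← support_sum_monomial_coeff f]
  apply Ideal.sum_mem
  intro d hd
  -- the "late" part of the monomial
  have hlatesum : (∑ j : Fin (n + 1), if r < (j : ℕ) then d j else 0)
      = ∑ j ∈ d.support.filter (fun j : Fin (n + 1) => r < (j : ℕ)), d j := by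
    rw [← Finset.sum_filter]
    refine (Finset.sum_subset (Finset.filter_subset_filter _ (Finset.subset_univ _)) ?_).symm
    intro j hj hj2
    have hns : j ∉ d.support := fun hs => hj2
      (Finset.mem_filter.mpr ⟨hs, (Finset.mem_filter.mp hj).2⟩)
    exact Finsupp.notMem_support_iff.mp hns
  have hlate : (∏ j ∈ d.support.filter (fun j : Fin (n + 1) => r < (j : ℕ)),
      (X j : MvPolynomial (Fin (n + 1)) k) ^ d j) ∈ (vanishingIdeal k n (Esub k n r)) ^ m := by
    have h1 := key (d.support.filter fun j : Fin (n + 1) => r < (j : ℕ)) d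
      (fun j hj => (Finset.mem_filter.mp hj).2)
    exact Ideal.pow_le_pow_right (hlatesum ▸ hf d hd) h1
  have := Ideal.mul_mem_left _
    (C (coeff d f) * ∏ j ∈ d.support.filter (fun j : Fin (n + 1) => ¬ r < (j : ℕ)),
      (X j : MvPolynomial (Fin (n + 1)) k) ^ d j) hlate
  convert this using 1
  rw [monomial_eq, Finsupp.prod]
  rw [← Finset.prod_filter_mul_prod_filter_not d.support (fun j : Fin (n + 1) => r < (j : ℕ))]
  ring
end Aux2
section Aux5
variable {k : Type*} [Field k]
lemma exists_lequiv {n r : ℕ} (hrn : r < n) (Wi : Submodule k (Fin (n + 1) → k))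
    (hdim : Module.finrank k Wi = r + 1) :
    ∃ u : (Fin (n + 1) → k) ≃ₗ[k] (Fin (n + 1) → k), ∀ x, x ∈ Esub k n r ↔ u x ∈ Wi := by
  classical
  have hle : r + 1 ≤ n + 1 := by omega
  have hN : (r + 1) + (n - r) = n + 1 := by omega
  obtain ⟨Ci, hCi⟩ := Submodule.exists_isCompl Wi
  have hfin : Module.finrank k (Fin (n + 1) → k) = n + 1 := by
    rw [Module.finrank_fintype_fun_eq_card, Fintype.card_fin]
  have hCdim : Module.finrank k Ci = n - r := by
    have h := Submodule.finrank_add_eq_of_isCompl hCi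
    rw [hdim, hfin] at h
    omega
  set bW := Module.finBasisOfFinrankEq k Wi hdim with hbW
  set bC := Module.finBasisOfFinrankEq k Ci hCdim with hbC
  set e : Fin (r + 1) ⊕ Fin (n - r) ≃ Fin (n + 1) := finSumFinEquiv.trans (finCongr hN) with he
  set B : Module.Basis (Fin (n + 1)) k (Fin (n + 1) → k) :=
    (((bW.prod bC).map (Submodule.prodEquivOfIsCompl _ _ hCi)).reindex e) with hBdef
  -- the first r+1 basis vectors are a basis of Wi
  have hBe : ∀ j : Fin (r + 1), B (Fin.castLE hle j) = (bW j : Fin (n + 1) → k) := by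
    intro j
    have hsymm : e.symm (Fin.castLE hle j) = Sum.inl j := by
      apply e.injective
      rw [Equiv.apply_symm_apply]
      ext
      simp [he]
    rw [hBdef, Module.Basis.reindex_apply, hsymm, Module.Basis.map_apply]
    have : (bW.prod bC) (Sum.inl j) = ((bW j : Wi), (0 : Ci)) := by
      apply Prod.ext
      · exact Module.Basis.prod_apply_inl_fst _ _ _
      · exact Module.Basis.prod_apply_inl_snd _ _ _
    rw [this, Submodule.coe_prodEquivOfIsCompl']
    simp
  have hBW : ∀ j : Fin (r + 1), B (Fin.castLE hle j) ∈ Wi := by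
    intro j
    rw [hBe j]
    exact Submodule.coe_mem _
  refine ⟨B.equivFun.symm, fun x => ?_⟩
  constructor
  · intro hx
    rw [Module.Basis.equivFun_symm_apply]
    apply Submodule.sum_mem
    intro l _
    by_cases hl : (l : ℕ) ≤ r
    · have : l = Fin.castLE hle ⟨(l : ℕ), by omega⟩ := by ext; simp
      rw [this]
      exact Submodule.smul_mem _ _ (hBW _)
    · rw [mem_Esub] at hx
      rw [hx l (by omega), zero_smul]
      exact Submodule.zero_mem _
  · intro hmem
    have hrepr : ∀ w ∈ Wi, ∀ j : Fin (n + 1), r < (j : ℕ) → B.repr w j = 0 := by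
      intro w hw
      have hspan : w ∈ Submodule.span k
          (Set.range (fun j : Fin (r + 1) => (bW j : Fin (n + 1) → k))) := by
        have h1 : (⟨w, hw⟩ : Wi) ∈ (⊤ : Submodule k Wi) := trivial
        rw [← bW.span_eq] at h1
        have h2 := Submodule.mem_map_of_mem (f := Wi.subtype) h1
        rw [Submodule.map_span] at h2
        rw [← Set.range_comp] at h2
        exact h2
      refine Submodule.span_induction ?_ ?_ ?_ ?_ hspan
      · rintro y ⟨j', rfl⟩ j hj
        show (B.repr (bW j' : Fin (n + 1) → k)) j = 0
        have h5 : (B.repr (B (Fin.castLE hle j'))) j = 0 := by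
          rw [B.repr_self]
          refine Finsupp.single_eq_of_ne' ?_
          intro hc
          rw [← hc] at hj
          simp only [Fin.coe_castLE] at hj
          omega
        rwa [hBe j'] at h5
      · intro j hj
        simp
      · intro y z _ _ hy hz j hj
        rw [map_add]
        simp [hy j hj, hz j hj]
      · intro c y _ hy j hj
        rw [map_smul]
        simp [hy j hj]
    intro j hj
    have hx : x = B.equivFun (B.equivFun.symm x) := (B.equivFun.apply_symm_apply x).symm
    rw [hx]
    rw [Module.Basis.equivFun_apply]
    exact hrepr _ hmem j hj

end Aux5
section Aux3
variable {k : Type*} [Field k]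
variable [Infinite k]

lemma lsub_lsub_symm {N : ℕ} (u : (Fin N → k) ≃ₗ[k] (Fin N → k)) (g : MvPolynomial (Fin N) k) :
    lsub u.toLinearMap (lsub u.symm.toLinearMap g) = g :=
  MvPolynomial.funext fun x => by
    rw [eval_lsub, eval_lsub]
    simp

lemma lsub_symm_lsub {N : ℕ} (u : (Fin N → k) ≃ₗ[k] (Fin N → k)) (g : MvPolynomial (Fin N) k) :
    lsub u.symm.toLinearMap (lsub u.toLinearMap g) = g :=
  MvPolynomial.funext fun x => by
    rw [eval_lsub, eval_lsub]
    simp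

lemma mem_pow_vanishing_iff {n m : ℕ} (Wi E : Submodule k (Fin (n + 1) → k))
    (u : (Fin (n + 1) → k) ≃ₗ[k] (Fin (n + 1) → k)) (hu : ∀ x, x ∈ E ↔ u x ∈ Wi)
    (f : MvPolynomial (Fin (n + 1)) k) :
    f ∈ (vanishingIdeal k n Wi) ^ m ↔
      lsub u.toLinearMap f ∈ (vanishingIdeal k n E) ^ m := by
  set φ := (lsub (k := k) u.toLinearMap).toRingHom with hφ
  set ψ := (lsub (k := k) u.symm.toLinearMap).toRingHom with hψ
  have h1 : Ideal.map φ (vanishingIdeal k n Wi) ≤ vanishingIdeal k n E := by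
    rw [Ideal.map_le_iff_le_comap]
    intro g hg x hx
    show MvPolynomial.eval x (lsub u.toLinearMap g) = 0
    rw [eval_lsub]
    exact hg _ ((hu x).mp hx)
  have h2 : Ideal.map ψ (vanishingIdeal k n E) ≤ vanishingIdeal k n Wi := by
    rw [Ideal.map_le_iff_le_comap]
    intro g hg y hy
    show MvPolynomial.eval y (lsub u.symm.toLinearMap g) = 0
    rw [eval_lsub]
    refine hg _ ((hu (u.symm y)).mpr ?_)
    simpa using hy
  constructor
  · intro h
    have := Ideal.mem_map_of_mem φ h
    rw [Ideal.map_pow] at this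
    exact Ideal.pow_right_mono h1 m this
  · intro h
    have := Ideal.mem_map_of_mem ψ h
    rw [Ideal.map_pow] at this
    have h3 := Ideal.pow_right_mono h2 m this
    have h4 : ψ (φ f) = f := lsub_symm_lsub u f
    show f ∈ _
    rw [← h4]
    exact h3

end Aux3
lemma card_adt (q e : ℕ) : (Finset.Nat.antidiagonalTuple q e).card = (q + e - 1).choose e := by
  have h1 : Nat.card ↥(Finset.Nat.antidiagonalTuple q e) = Nat.card (Sym (Fin q) e) := by
    apply Nat.card_congr
    exact ((Equiv.subtypeEquivRight (fun x => Finset.Nat.mem_antidiagonalTuple)).trans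
      (Sym.equivNatSumOfFintype (Fin q) e).symm)
  rw [Nat.card_eq_fintype_card, Nat.card_eq_fintype_card, Fintype.card_coe,
    Sym.card_sym_eq_choose, Fintype.card_fin] at h1
  exact h1

def earlyPart {n r : ℕ} (hrn : r < n) (d : Fin (n + 1) → ℕ) : Fin (r + 1) → ℕ :=
  fun j => d (Fin.castLE (by omega) j)

def latePart {n r : ℕ} (hrn : r < n) (d : Fin (n + 1) → ℕ) : Fin (n - r) → ℕ :=
  fun j => d (Fin.cast (by omega) (Fin.natAdd (r + 1) j))

lemma sum_split {n r : ℕ} (hrn : r < n) (d : Fin (n + 1) → ℕ) :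
    (∑ j, d j) = (∑ j, earlyPart hrn d j) + (∑ j, latePart hrn d j) := by
  have hN : (r + 1) + (n - r) = n + 1 := by omega
  have h0 : (∑ j, d j) = ∑ j : Fin ((r + 1) + (n - r)), d (Fin.cast hN j) := by
    refine (Fintype.sum_equiv (finCongr hN) _ _ ?_).symm
    intro j; rfl
  rw [h0, Fin.sum_univ_add]
  rfl

lemma late_split {n r : ℕ} (hrn : r < n) (d : Fin (n + 1) → ℕ) :
    (∑ j : Fin (n + 1), if r < (j : ℕ) then d j else 0)
      = ∑ j, latePart hrn d j := by
  have hN : (r + 1) + (n - r) = n + 1 := by omega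
  have h0 : (∑ j : Fin (n + 1), if r < (j : ℕ) then d j else 0)
      = ∑ j : Fin ((r + 1) + (n - r)),
          (if r < ((Fin.cast hN j : Fin (n + 1)) : ℕ) then d (Fin.cast hN j) else 0) := by
    refine (Fintype.sum_equiv (finCongr hN) _ _ ?_).symm
    intro j; rfl
  rw [h0, Fin.sum_univ_add]
  have h1 : ∀ j : Fin (r + 1),
      (if r < ((Fin.cast hN (Fin.castAdd (n - r) j) : Fin (n + 1)) : ℕ)
        then d (Fin.cast hN (Fin.castAdd (n - r) j)) else 0) = 0 := by
    intro j
    rw [if_neg]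
    simp only [Fin.coe_cast, Fin.coe_castAdd]
    omega
  rw [Finset.sum_congr rfl (fun j _ => h1 j), Finset.sum_const, smul_zero, zero_add]
  refine Finset.sum_congr rfl fun j _ => ?_
  have hc : r < ((Fin.cast hN (Fin.natAdd (r + 1) j) : Fin (n + 1)) : ℕ) := by
    simp only [Fin.coe_cast, Fin.coe_natAdd]
    omega
  rw [if_pos hc]
  rfl


lemma card_bad_le {n r m t : ℕ} (hrn : r < n) (hmt : m ≤ t) :
    ((Finset.Nat.antidiagonalTuple (n + 1) t).filter
      (fun d => (∑ j : Fin (n + 1), if r < (j : ℕ) then d j else 0) < m)).card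
      ≤ cConst n r m t := by
  classical
  set B := (Finset.Nat.antidiagonalTuple (n + 1) t).filter
      (fun d => (∑ j : Fin (n + 1), if r < (j : ℕ) then d j else 0) < m) with hB
  let T := Σ a : Fin m, ↥(Finset.Nat.antidiagonalTuple (r + 1) (t - (a : ℕ)))
      × ↥(Finset.Nat.antidiagonalTuple (n - r) ((a : ℕ)))
  have hmem : ∀ d : ↥B, (∑ j, d.1 j = t) ∧
      (∑ j : Fin (n + 1), if r < (j : ℕ) then d.1 j else 0) < m := by
    intro d
    have := Finset.mem_filter.mp d.2
    exact ⟨Finset.Nat.mem_antidiagonalTuple.mp this.1, this.2⟩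
  let F : ↥B → T := fun d =>
    ⟨⟨∑ j : Fin (n + 1), if r < (j : ℕ) then d.1 j else 0, (hmem d).2⟩,
     ⟨earlyPart hrn d.1, by
        rw [Finset.Nat.mem_antidiagonalTuple]
        show (∑ j, earlyPart hrn d.1 j)
          = t - (∑ j : Fin (n + 1), if r < (j : ℕ) then d.1 j else 0)
        have h1 := sum_split hrn d.1
        have h2 := late_split hrn d.1
        have h3 := (hmem d).1
        omega⟩,
     ⟨latePart hrn d.1, by
        rw [Finset.Nat.mem_antidiagonalTuple]
        exact (late_split hrn d.1).symm⟩⟩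
  let G : T → (Fin (n + 1) → ℕ) := fun p j =>
    if h : (j : ℕ) < r + 1 then p.2.1.1 ⟨(j : ℕ), h⟩
    else p.2.2.1 ⟨(j : ℕ) - (r + 1), by have := j.isLt; omega⟩
  have hGF : ∀ d : ↥B, G (F d) = d.1 := by
    intro d
    funext j
    simp only [G, F]
    by_cases h : (j : ℕ) < r + 1
    · rw [dif_pos h]
      exact congrArg d.1 (by ext; simp [Fin.castLE])
    · rw [dif_neg h]
      refine congrArg d.1 ?_
      ext
      simp only [Fin.coe_cast, Fin.coe_natAdd, Fin.val_mk]
      have := j.isLt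
      omega
  have hinj : Function.Injective F := fun d d' h =>
    Subtype.ext (by rw [← hGF d, ← hGF d', h])
  have hcard : B.card ≤ Fintype.card T := by
    rw [← Fintype.card_coe B]
    exact Fintype.card_le_of_injective F hinj
  have hT : Fintype.card T
      = ∑ a : Fin m, (Finset.Nat.antidiagonalTuple (r + 1) (t - (a : ℕ))).card
          * (Finset.Nat.antidiagonalTuple (n - r) ((a : ℕ))).card := by
    rw [Fintype.card_sigma]
    refine Finset.sum_congr rfl fun a _ => ?_
    rw [Fintype.card_prod, Fintype.card_coe, Fintype.card_coe]
  have hsum : (∑ a : Fin m, (Finset.Nat.antidiagonalTuple (r + 1) (t - (a : ℕ))).card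
      * (Finset.Nat.antidiagonalTuple (n - r) ((a : ℕ))).card)
      = ∑ a ∈ Finset.range m, (Finset.Nat.antidiagonalTuple (r + 1) (t - a)).card
          * (Finset.Nat.antidiagonalTuple (n - r) a).card :=
    Fin.sum_univ_eq_sum_range (fun a => (Finset.Nat.antidiagonalTuple (r + 1) (t - a)).card
      * (Finset.Nat.antidiagonalTuple (n - r) a).card) m
  have hterm : ∀ a ∈ Finset.range m,
      (Finset.Nat.antidiagonalTuple (r + 1) (t - a)).card
        * (Finset.Nat.antidiagonalTuple (n - r) a).card
      = Nat.choose (t - a + r) r * Nat.choose (a + n - r - 1) (n - r - 1) := by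
    intro a ha
    have ham : a < m := Finset.mem_range.mp ha
    rw [card_adt, card_adt]
    congr 1
    · have e1 : (r + 1) + (t - a) - 1 = t - a + r := by omega
      have e3 : (t - a + r).choose (t - a) = (t - a + r).choose r := by
        have h4 := Nat.choose_symm (show t - a ≤ t - a + r by omega)
        rw [show t - a + r - (t - a) = r by omega] at h4
        exact h4.symm
      rw [e1, e3]
    · have e1 : (n - r) + a - 1 = a + n - r - 1 := by omega
      have e3 : (a + n - r - 1).choose a = (a + n - r - 1).choose (n - r - 1) := by
        have h4 := Nat.choose_symm (show a ≤ a + n - r - 1 by omega)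
        rw [show a + n - r - 1 - a = n - r - 1 by omega] at h4
        exact h4.symm
      rw [e1, e3]
  calc B.card ≤ Fintype.card T := hcard
    _ = _ := hT
    _ = _ := hsum
    _ = cConst n r m t := Finset.sum_congr rfl hterm


/-- Let `k` be algebraically closed, `n > r ≥ 0`, `s ≥ 1`, and let
`L_1,…,L_s` be pairwise disjoint `r`-dimensional linear subspaces of `P^n` (given by
`(r+1)`-dimensional subspaces `W i ⊆ k^{n+1}` meeting pairwise only in `0`). Let
`m_1,…,m_s ≥ 1`, `m = max_i m_i`, `t ≥ m`. If `C(t+n, n) − Σ_i c_{n,r,m_i,t} > 0`, then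
`I = I(L_1)^{m_1} ∩ … ∩ I(L_s)^{m_s}` contains a nonzero homogeneous polynomial of
degree `t`; in particular `α(I) ≤ t`. -/
theorem stmt_2 (k : Type*) [Field k] [IsAlgClosed k] (n r s : ℕ)
    (hrn : r < n) (hs : 1 ≤ s)
    (W : Fin s → Submodule k (Fin (n + 1) → k))
    (hdim : ∀ i, Module.finrank k (W i) = r + 1)
    (hdisj : ∀ i j, i ≠ j → W i ⊓ W j = ⊥)
    (mi : Fin s → ℕ) (hmi : ∀ i, 1 ≤ mi i)
    (t : ℕ) (ht : ∀ i, mi i ≤ t)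
    (hpos : 0 < (Nat.choose (t + n) n : ℤ) - ∑ i, (cConst n r (mi i) t : ℤ)) :
    (∃ f ∈ ⨅ i, (vanishingIdeal k n (W i)) ^ (mi i),
        f ≠ 0 ∧ MvPolynomial.IsHomogeneous f t) ∧
    alphaDeg (⨅ i, (vanishingIdeal k n (W i)) ^ (mi i)) ≤ t := by
  classical
  choose u hu using fun i => exists_lequiv hrn (W i) (hdim i)
  set A := Finset.Nat.antidiagonalTuple (n + 1) t with hA
  set toF : (Fin (n + 1) → ℕ) → (Fin (n + 1) →₀ ℕ) :=
    fun d => Finsupp.equivFunOnFinite.symm d with htoF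
  have hdeg : ∀ d : Fin (n + 1) → ℕ, (toF d).degree = ∑ j, d j := by
    intro d
    rw [Finsupp.degree_apply]
    rw [Finset.sum_subset (Finset.subset_univ (toF d).support) ?_]
    · exact Finset.sum_congr rfl fun j _ => rfl
    · intro j _ hj
      exact Finsupp.notMem_support_iff.mp hj
  set bad : Fin s → Finset (Fin (n + 1) → ℕ) := fun i =>
    A.filter (fun d => (∑ j : Fin (n + 1), if r < (j : ℕ) then d j else 0) < mi i) with hbad
  set Ψ : (↥A → k) →ₗ[k] MvPolynomial (Fin (n + 1)) k :=
    ∑ d : ↥A, (MvPolynomial.monomial (toF d.1)).comp (LinearMap.proj d) with hΨ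
  have hΨapp : ∀ v : ↥A → k, Ψ v = ∑ d : ↥A, MvPolynomial.monomial (toF d.1) (v d) := by
    intro v
    rw [hΨ, LinearMap.sum_apply]
    exact Finset.sum_congr rfl fun d _ => rfl
  have hcoeff : ∀ (v : ↥A → k) (d : ↥A), MvPolynomial.coeff (toF d.1) (Ψ v) = v d := by
    intro v d
    rw [hΨapp, MvPolynomial.coeff_sum]
    have h1 : ∀ d' : ↥A, MvPolynomial.coeff (toF d.1) (MvPolynomial.monomial (toF d'.1) (v d'))
        = if d' = d then v d' else 0 := by
      intro d'
      rw [MvPolynomial.coeff_monomial]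
      by_cases hdd : d' = d
      · simp [hdd]
      · rw [if_neg hdd, if_neg]
        intro hc
        exact hdd (Subtype.ext (Finsupp.equivFunOnFinite.symm.injective hc))
    rw [Finset.sum_congr rfl fun d' _ => h1 d']
    simp
  have hhom : ∀ v : ↥A → k, (Ψ v).IsHomogeneous t := by
    intro v
    rw [hΨapp]
    apply MvPolynomial.IsHomogeneous.sum
    intro d _
    apply MvPolynomial.isHomogeneous_monomial
    rw [hdeg]
    exact Finset.Nat.mem_antidiagonalTuple.mp d.2
  set Φ : (↥A → k) →ₗ[k] ((Σ i : Fin s, ↥(bad i)) → k) := LinearMap.pi (fun p =>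
    (MvPolynomial.lcoeff k (toF p.2.1)) ∘ₗ (lsub (u p.1).toLinearMap).toLinearMap ∘ₗ Ψ) with hΦ
  have hΦapp : ∀ (v : ↥A → k) (p : Σ i : Fin s, ↥(bad i)),
      Φ v p = MvPolynomial.coeff (toF p.2.1) (lsub (u p.1).toLinearMap (Ψ v)) := by
    intro v p
    rw [hΦ, LinearMap.pi_apply]
    rfl
  -- cardinalities
  have hcardA : Fintype.card ↥A = (t + n).choose n := by
    rw [Fintype.card_coe, hA, card_adt]
    rw [show (n + 1) + t - 1 = n + t by omega]
    have h4 := Nat.choose_symm (show t ≤ n + t by omega)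
    rw [show n + t - t = n by omega] at h4
    rw [Nat.add_comm t n]
    exact h4.symm
  have hcardT : Fintype.card (Σ i : Fin s, ↥(bad i)) ≤ ∑ i, cConst n r (mi i) t := by
    rw [Fintype.card_sigma]
    apply Finset.sum_le_sum
    intro i _
    rw [Fintype.card_coe]
    exact card_bad_le hrn (ht i)
  have hlt : (∑ i, cConst n r (mi i) t) < (t + n).choose n := by
    have h0 : ((∑ i, cConst n r (mi i) t : ℕ) : ℤ) < (((t + n).choose n : ℕ) : ℤ) := by
      push_cast
      linarith
    exact_mod_cast h0
  have hnotinj : ¬ Function.Injective Φ := by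
    intro hinj
    have hle1 := LinearMap.finrank_le_finrank_of_injective hinj
    rw [Module.finrank_fintype_fun_eq_card, Module.finrank_fintype_fun_eq_card] at hle1
    rw [hcardA] at hle1
    omega
  have hker : ∃ v : ↥A → k, v ≠ 0 ∧ Φ v = 0 := by
    by_contra hcon
    push_neg at hcon
    apply hnotinj
    apply LinearMap.ker_eq_bot.mp
    rw [Submodule.eq_bot_iff]
    intro v hv
    by_contra hvne
    exact hcon v hvne (LinearMap.mem_ker.mp hv)
  obtain ⟨v, hv0, hvker⟩ := hker
  set f := Ψ v with hfdef
  have hfhom : f.IsHomogeneous t := hhom v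
  have hfne : f ≠ 0 := by
    obtain ⟨d, hd⟩ := Function.ne_iff.mp hv0
    intro hzero
    apply hd
    rw [← hcoeff v d, ← hfdef, hzero]
    simp
  have hmem : ∀ i, f ∈ (vanishingIdeal k n (W i)) ^ (mi i) := by
    intro i
    rw [mem_pow_vanishing_iff (W i) (Esub k n r) (u i) (hu i) f]
    apply mem_pow_vanishing
    intro d' hd'
    by_contra hlt'
    push_neg at hlt'
    have hghom := lsub_isHomogeneous (u i).toLinearMap hfhom
    have hw : (Finsupp.weight 1) d' = t := hghom (MvPolynomial.mem_support_iff.mp hd')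
    have hdeg' : (∑ j, d' j) = t := by
      have h5 : (toF (Finsupp.equivFunOnFinite d')).degree = ∑ j, d' j := hdeg _
      rw [htoF] at h5
      simp only [Equiv.symm_apply_apply] at h5
      rw [← h5, Finsupp.degree_eq_weight_one]
      exact hw
    have hA1 : (Finsupp.equivFunOnFinite d' : Fin (n + 1) → ℕ) ∈ A :=
      Finset.Nat.mem_antidiagonalTuple.mpr hdeg'
    have hbad1 : (Finsupp.equivFunOnFinite d' : Fin (n + 1) → ℕ) ∈ bad i :=
      Finset.mem_filter.mpr ⟨hA1, hlt'⟩
    have h6 := congrFun hvker ⟨i, ⟨_, hbad1⟩⟩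
    rw [hΦapp] at h6
    simp only [Pi.zero_apply] at h6
    apply MvPolynomial.mem_support_iff.mp hd'
    have h7 : toF (Finsupp.equivFunOnFinite d' : Fin (n + 1) → ℕ) = d' := by
      rw [htoF]
      exact Equiv.symm_apply_apply _ _
    rw [← h7]
    exact h6
  have hmemInf : f ∈ ⨅ i, (vanishingIdeal k n (W i)) ^ (mi i) := by
    rw [Submodule.mem_iInf]
    exact hmem
  refine ⟨⟨f, hmemInf, hfne, hfhom⟩, ?_⟩
  exact Nat.sInf_le ⟨f, hmemInf, hfne, hfhom⟩
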